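/- For a lazy finite Markov kernel P with stationary distribution π and any A ⊆ V, a state x ∈ A belongs to the internal boundary ∂_in(A) = {x ∈ A : P(x,Aᶜ) > 0} if and only if x ∉ A_u for every u > 1 − P₀, where P₀ = min{P(x,y) : x ≠ y, P(x,y) > 0}. -/

import Mathlib

open Finset

variable {V : Type*}

/-- Ergodic flow from a set `A` into a state `y`: `Q(A,y) = ∑_{x∈A} π(x) P(x,y)`. -/
def ergFlow [Fintype V] (π : V → ℝ) (P : Matrix V V ℝ) (A : Finset V) (y : V) : ℝ :=
  ∑ x ∈ A, π x * P x y

/-- The evolving set `A_u = {y : Q(A,y) ≥ u π(y)}`. -/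
noncomputable def evolSet [Fintype V] (π : V → ℝ) (P : Matrix V V ℝ) (A : Finset V) (u : ℝ) :
    Finset V :=
  Finset.univ.filter (fun y => u * π y ≤ ergFlow π P A y)

/-- Stationary mass of a set: `π(A)`. -/
def mass (π : V → ℝ) (A : Finset V) : ℝ := ∑ y ∈ A, π y

/-- Ergodic flow between sets: `Q(A,B)`. -/
def ergFlowSet (π : V → ℝ) (P : Matrix V V ℝ) (A B : Finset V) : ℝ :=
  ∑ x ∈ A, ∑ y ∈ B, π x * P x y

/-- Membership in the internal boundary is characterized by exclusion from `A_u`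
for all `u > 1 - P₀`. -/
theorem internal_boundary_evolSet [Fintype V] [DecidableEq V]
    (π : V → ℝ) (P : Matrix V V ℝ)
    (hPnn : ∀ x y, 0 ≤ P x y) (hProw : ∀ x, ∑ y, P x y = 1)
    (hπpos : ∀ x, 0 < π x) (hπsum : ∑ x, π x = 1)
    (hstat : ∀ y, ∑ x, π x * P x y = π y)
    (hrev : ∀ x y, π x * P x y = π y * P y x)
    (hlazy : ∀ x, (1:ℝ)/2 ≤ P x x)
    (P0 : ℝ)
    (hP0 : IsLeast {p : ℝ | ∃ x y : V, x ≠ y ∧ 0 < P x y ∧ P x y = p} P0)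
    (A : Finset V) (x : V) (hx : x ∈ A) :
    (0 < ∑ y ∈ Aᶜ, P x y) ↔ ∀ u : ℝ, 1 - P0 < u → x ∉ evolSet π P A u := by

  set S := ∑ y ∈ Aᶜ, P x y with hSdef
  have hflow : ergFlow π P A x = π x * (1 - S) := by
    have h1 : ergFlow π P A x = ∑ z ∈ A, π x * P x z :=
      Finset.sum_congr rfl fun z _ => hrev z x
    have h2 : ∑ z ∈ A, P x z + S = 1 := by
      rw [hSdef, Finset.sum_add_sum_compl]; exact hProw x
    have h3 : ∑ z ∈ A, P x z = 1 - S := by linarith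
    rw [h1, ← Finset.mul_sum, h3]
  have hmem : ∀ u : ℝ, x ∈ evolSet π P A u ↔ u ≤ 1 - S := by
    intro u
    simp only [evolSet, Finset.mem_filter, Finset.mem_univ, true_and, hflow]
    rw [mul_comm (π x)]
    exact mul_le_mul_iff_of_pos_right (hπpos x)
  constructor
  · intro hpos u hu
    have h0 : (0:ℝ) = ∑ y ∈ Aᶜ, (0:ℝ) := by simp
    obtain ⟨y, hyA, hy⟩ := Finset.exists_lt_of_sum_lt (h0 ▸ hpos)
    have hxy : x ≠ y := fun h => (Finset.mem_compl.mp hyA) (h ▸ hx)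
    have hle : P0 ≤ P x y := hP0.2 ⟨x, y, hxy, hy, rfl⟩
    have hsum : P x y ≤ S :=
      Finset.single_le_sum (fun i _ => hPnn x i) hyA
    rw [hmem]; linarith
  · intro h
    have hP0S : P0 ≤ S := by
      by_contra hc
      push_neg at hc
      have := h (1 - S) (by linarith)
      rw [hmem] at this
      exact this le_rfl
    obtain ⟨⟨a, b, hab, hp, he⟩, -⟩ := hP0
    linarith
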